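/- Define F(n) = c + (r − d·exp(α(u − γn)))·n, assume d·e^(αu) > r, let n̄ be the unique positive critical point of F, assume F(n̄) < 0, and let n₁ < n̄ < n₂ be the two zeros of F in (0,∞). Let n : [0,∞) → ℝ be differentiable with n′(t) = F(n(t)) for all t ≥ 0 and n(0) = n₀ ∈ [0, n₂). Then n(t) converges to n₁ as t → ∞. -/

import Mathlib

/-- The right-hand side of the deterministic limiting bond equation. -/
noncomputable def Fb (α γ u c r d : ℝ) : ℝ → ℝ :=
  fun n => c + (r - d * Real.exp (α * (u - γ * n))) * n

/-- Suppose `d·e^(αu) > r`, `n̄` is the unique positive critical point of `F`,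
`F(n̄) < 0`, and `n₁ < n̄ < n₂` are the two zeros of `F` in `(0,∞)`. If
`n : [0,∞) → ℝ` is differentiable with `n′(t) = F(n(t))` and
`n(0) = n₀ ∈ [0, n₂)`, then `n(t) → n₁` as `t → ∞`. -/
theorem stmt_14 (α γ u c r d : ℝ) (hα : 0 < α) (hγ : 0 < γ) (hu : 0 < u)
    (hc : 0 < c) (hr : 0 < r) (hd : 0 < d)
    (h : r < d * Real.exp (α * u))
    (nbar : ℝ) (hnbar : 0 < nbar)
    (hcrit : deriv (Fb α γ u c r d) nbar = 0)
    (huniq : ∀ m : ℝ, 0 < m → deriv (Fb α γ u c r d) m = 0 → m = nbar)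
    (hFneg : Fb α γ u c r d nbar < 0)
    (n₁ n₂ : ℝ) (hn₁ : 0 < n₁) (h₁bar : n₁ < nbar) (hbar₂ : nbar < n₂)
    (hz₁ : Fb α γ u c r d n₁ = 0) (hz₂ : Fb α γ u c r d n₂ = 0)
    (n : ℝ → ℝ)
    (hderiv : ∀ t : ℝ, 0 ≤ t →
      HasDerivWithinAt n (Fb α γ u c r d (n t)) (Set.Ici 0) t)
    (h0 : 0 ≤ n 0) (h0' : n 0 < n₂) :
    Filter.Tendsto n Filter.atTop (nhds n₁) := by
  set F := Fb α γ u c r d with hFdef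
  have hFc : ContDiff ℝ 1 F := by
    rw [hFdef]; unfold Fb; fun_prop
  have hFcont : Continuous F := hFc.continuous
  have hFdcont : Continuous (deriv F) := hFc.continuous_deriv le_rfl
  have hFdiff : Differentiable ℝ F := hFc.differentiable one_ne_zero
  -- derivative of F is negative on (0, nbar)
  have hdneg : ∀ x ∈ Set.Ioo 0 nbar, deriv F x < 0 := by
    obtain ⟨ξ, hξmem, hξ⟩ := exists_deriv_eq_slope F h₁bar
      hFcont.continuousOn hFdiff.differentiableOn
    have hξneg : deriv F ξ < 0 := by
      rw [hξ, hz₁, sub_zero]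
      exact div_neg_of_neg_of_pos hFneg (by linarith)
    intro x hx
    rcases lt_trichotomy (deriv F x) 0 with h' | h' | h'
    · exact h'
    · exact absurd (huniq x hx.1 h') (ne_of_lt hx.2)
    · exfalso
      have h0m : (0 : ℝ) ∈ Set.uIcc (deriv F x) (deriv F ξ) :=
        Set.mem_uIcc.2 (Or.inr ⟨hξneg.le, h'.le⟩)
      obtain ⟨m, hm, hm0⟩ := intermediate_value_uIcc hFdcont.continuousOn h0m
      rcases Set.mem_uIcc.1 hm with ⟨h1, h2⟩ | ⟨h1, h2⟩
      · have hm1 : 0 < m := lt_of_lt_of_le hx.1 h1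
        have hm2 : m < nbar := lt_of_le_of_lt h2 hξmem.2
        exact absurd (huniq m hm1 hm0) (ne_of_lt hm2)
      · have hm1 : 0 < m := lt_of_lt_of_le (hn₁.trans hξmem.1) h1
        have hm2 : m < nbar := lt_of_le_of_lt h2 hx.2
        exact absurd (huniq m hm1 hm0) (ne_of_lt hm2)
  -- derivative of F is positive on (nbar, ∞)
  have hdpos : ∀ x ∈ Set.Ioi nbar, 0 < deriv F x := by
    obtain ⟨ξ, hξmem, hξ⟩ := exists_deriv_eq_slope F hbar₂
      hFcont.continuousOn hFdiff.differentiableOn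
    have hξpos : 0 < deriv F ξ := by
      rw [hξ, hz₂, zero_sub]
      exact div_pos (by linarith) (by linarith)
    intro x hx
    simp only [Set.mem_Ioi] at hx
    rcases lt_trichotomy (deriv F x) 0 with h' | h' | h'
    · exfalso
      have h0m : (0 : ℝ) ∈ Set.uIcc (deriv F x) (deriv F ξ) :=
        Set.mem_uIcc.2 (Or.inl ⟨h'.le, hξpos.le⟩)
      obtain ⟨m, hm, hm0⟩ := intermediate_value_uIcc hFdcont.continuousOn h0m
      rcases Set.mem_uIcc.1 hm with ⟨h1, h2⟩ | ⟨h1, h2⟩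
      · have hm1 : nbar < m := lt_of_lt_of_le hx h1
        exact absurd (huniq m (hnbar.trans hm1) hm0) (ne_of_gt hm1)
      · have hm1 : nbar < m := lt_of_lt_of_le hξmem.1 h1
        exact absurd (huniq m (hnbar.trans hm1) hm0) (ne_of_gt hm1)
    · exact absurd (huniq x (hnbar.trans hx) h') (ne_of_gt hx)
    · exact h'
  have hanti : StrictAntiOn F (Set.Icc 0 nbar) :=
    strictAntiOn_of_deriv_neg (convex_Icc 0 nbar) hFcont.continuousOn
      (by rw [interior_Icc]; exact hdneg)
  have hmonoF : StrictMonoOn F (Set.Ici nbar) :=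
    strictMonoOn_of_deriv_pos (convex_Ici nbar) hFcont.continuousOn
      (by rw [interior_Ici]; exact hdpos)
  have hFpos : ∀ x, 0 ≤ x → x < n₁ → 0 < F x := by
    intro x hx1 hx2
    have := hanti ⟨hx1, by linarith⟩ ⟨hn₁.le, h₁bar.le⟩ hx2
    rw [hz₁] at this
    exact this
  have hFneg2 : ∀ x, n₁ < x → x < n₂ → F x < 0 := by
    intro x hx1 hx2
    rcases le_or_gt x nbar with hx | hx
    · have := hanti ⟨hn₁.le, h₁bar.le⟩ ⟨by linarith, hx⟩ hx1
      rw [hz₁] at this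
      exact this
    · have := hmonoF (Set.mem_Ici.2 hx.le) (Set.mem_Ici.2 hbar₂.le) hx2
      rw [hz₂] at this
      exact this
  -- basic facts about n
  have hncont : ContinuousOn n (Set.Ici 0) := fun t ht => (hderiv t ht).continuousWithinAt
  have hnAt : ∀ t : ℝ, 0 < t → HasDerivAt n (F (n t)) t := fun t ht =>
    (hderiv t ht.le).hasDerivAt (Ici_mem_nhds ht)
  -- core comparison lemmas
  have core : ∀ a b : ℝ, 0 ≤ a → a ≤ b → ∀ δ : ℝ,
      (∀ σ ∈ Set.Ioo a b, δ ≤ F (n σ)) → n a + δ * (b - a) ≤ n b := by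
    intro a b ha hab δ hδ
    rcases eq_or_lt_of_le hab with rfl | hab'
    · simp
    · have hsub : Set.Icc a b ⊆ Set.Ici 0 :=
        Set.Icc_subset_Ici_self.trans (Set.Ici_subset_Ici.2 ha)
      have hg : MonotoneOn (fun s => n s - δ * s) (Set.Icc a b) := by
        apply monotoneOn_of_deriv_nonneg (convex_Icc a b)
        · exact (hncont.mono hsub).sub ((continuous_const.mul continuous_id).continuousOn)
        · rw [interior_Icc]
          intro σ hσ
          have hσ0 : 0 < σ := lt_of_le_of_lt ha hσ.1
          exact ((hnAt σ hσ0).sub ((hasDerivAt_id σ).const_mul δ)).differentiableAt.differentiableWithinAt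
        · rw [interior_Icc]
          intro σ hσ
          have hσ0 : 0 < σ := lt_of_le_of_lt ha hσ.1
          have hD : HasDerivAt (fun s => n s - δ * s) (F (n σ) - δ * 1) σ :=
            (hnAt σ hσ0).sub ((hasDerivAt_id σ).const_mul δ)
          rw [hD.deriv]
          have := hδ σ hσ
          linarith
      have := hg ⟨le_rfl, hab⟩ ⟨hab, le_rfl⟩ hab
      have hr2 : δ * (b - a) = δ * b - δ * a := by ring
      simp only at this
      linarith
  have core' : ∀ a b : ℝ, 0 ≤ a → a ≤ b → ∀ δ : ℝ,
      (∀ σ ∈ Set.Ioo a b, F (n σ) ≤ δ) → n b ≤ n a + δ * (b - a) := by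
    intro a b ha hab δ hδ
    rcases eq_or_lt_of_le hab with rfl | hab'
    · simp
    · have hsub : Set.Icc a b ⊆ Set.Ici 0 :=
        Set.Icc_subset_Ici_self.trans (Set.Ici_subset_Ici.2 ha)
      have hg : AntitoneOn (fun s => n s - δ * s) (Set.Icc a b) := by
        apply antitoneOn_of_deriv_nonpos (convex_Icc a b)
        · exact (hncont.mono hsub).sub ((continuous_const.mul continuous_id).continuousOn)
        · rw [interior_Icc]
          intro σ hσ
          have hσ0 : 0 < σ := lt_of_le_of_lt ha hσ.1
          exact ((hnAt σ hσ0).sub ((hasDerivAt_id σ).const_mul δ)).differentiableAt.differentiableWithinAt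
        · rw [interior_Icc]
          intro σ hσ
          have hσ0 : 0 < σ := lt_of_le_of_lt ha hσ.1
          have hD : HasDerivAt (fun s => n s - δ * s) (F (n σ) - δ * 1) σ :=
            (hnAt σ hσ0).sub ((hasDerivAt_id σ).const_mul δ)
          rw [hD.deriv]
          have := hδ σ hσ
          linarith
      have := hg ⟨le_rfl, hab⟩ ⟨hab, le_rfl⟩ hab
      have hr2 : δ * (b - a) = δ * b - δ * a := by ring
      simp only at this
      linarith
  -- n stays nonnegative
  have hA : ∀ t, 0 ≤ t → 0 ≤ n t := by
    intro t ht
    by_contra hneg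
    push_neg at hneg
    set S := Set.Icc 0 t ∩ n ⁻¹' Set.Ici 0 with hSdef
    have hSclosed : IsClosed S :=
      (hncont.mono Set.Icc_subset_Ici_self).preimage_isClosed_of_isClosed isClosed_Icc isClosed_Ici
    have hSne : S.Nonempty := ⟨0, ⟨le_rfl, ht⟩, h0⟩
    have hSbdd : BddAbove S := ⟨t, fun σ hσ => hσ.1.2⟩
    set τ := sSup S with hτdef
    have hτS : τ ∈ S := hSclosed.csSup_mem hSne hSbdd
    have hτ0 : 0 ≤ τ := hτS.1.1
    have hτt : τ < t := by
      rcases lt_or_eq_of_le hτS.1.2 with h' | h'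
      · exact h'
      · exfalso; rw [h'] at hτS; exact absurd hτS.2 (not_le.2 hneg)
    have hgt : ∀ σ, σ ∈ Set.Ioc τ t → n σ < 0 := by
      intro σ hσ
      by_contra hcon
      push_neg at hcon
      have : σ ∈ S := ⟨⟨le_trans hτ0 hσ.1.le, hσ.2⟩, hcon⟩
      exact absurd (le_csSup hSbdd this) (not_le.2 hσ.1)
    have hIoi : Set.Ioi τ ⊆ Set.Ici 0 := fun σ hσ => le_of_lt (lt_of_le_of_lt hτ0 hσ)
    have hnτ : n τ = 0 := by
      refine le_antisymm ?_ hτS.2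
      have hcw : ContinuousWithinAt n (Set.Ioi τ) τ := (hncont τ hτ0).mono hIoi
      refine le_of_tendsto hcw ?_
      filter_upwards [Ioc_mem_nhdsGT_of_mem (Set.mem_Ico.2 ⟨le_rfl, hτt⟩)] with σ hσ
      exact (hgt σ hσ).le
    have hF0 : F (n τ) = c := by rw [hnτ, hFdef]; simp [Fb]
    have hds : HasDerivWithinAt n c (Set.Ioi τ) τ := by
      have := ((hderiv τ hτ0).mono hIoi)
      rwa [hF0] at this
    have hslope := hasDerivWithinAt_iff_tendsto_slope.1 hds
    rw [Set.diff_singleton_eq_self (by simp)] at hslope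
    have hev1 : ∀ᶠ σ in nhdsWithin τ (Set.Ioi τ), 0 < slope n τ σ :=
      hslope.eventually (eventually_gt_nhds hc)
    have hev2 : Set.Ioc τ t ∈ nhdsWithin τ (Set.Ioi τ) :=
      Ioc_mem_nhdsGT_of_mem (Set.mem_Ico.2 ⟨le_rfl, hτt⟩)
    obtain ⟨σ, hsl, hσmem⟩ := (hev1.and (Filter.eventually_of_mem hev2 (fun x hx => hx))).exists
    rw [slope_def_field] at hsl
    have hστ : 0 < σ - τ := sub_pos.2 hσmem.1
    have hpos : 0 < n σ - n τ := by
      have := mul_pos hsl hστ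
      rwa [div_mul_cancel₀ _ (ne_of_gt hστ)] at this
    have : 0 < n σ := by rw [hnτ] at hpos; linarith
    exact absurd this (not_lt.2 (hgt σ hσmem).le)
  -- n stays below n₂
  have hB : ∀ t, 0 ≤ t → n t < n₂ := by
    intro t ht
    by_contra hge
    push_neg at hge
    set T := Set.Icc 0 t ∩ n ⁻¹' Set.Ici n₂ with hTdef
    have hTclosed : IsClosed T :=
      (hncont.mono Set.Icc_subset_Ici_self).preimage_isClosed_of_isClosed isClosed_Icc isClosed_Ici
    have hTne : T.Nonempty := ⟨t, ⟨ht, le_rfl⟩, hge⟩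
    have hTbdd : BddBelow T := ⟨0, fun σ hσ => hσ.1.1⟩
    set t₀ := sInf T with ht₀def
    have ht₀T : t₀ ∈ T := hTclosed.csInf_mem hTne hTbdd
    have ht₀0 : 0 ≤ t₀ := ht₀T.1.1
    have hbefore : ∀ σ, 0 ≤ σ → σ < t₀ → n σ < n₂ := by
      intro σ h1 h2
      by_contra hcon
      push_neg at hcon
      have : σ ∈ T := ⟨⟨h1, le_trans h2.le ht₀T.1.2⟩, hcon⟩
      exact absurd (csInf_le hTbdd this) (not_le.2 h2)
    set U := (Set.Icc 0 t₀ ∩ n ⁻¹' Set.Iic n₁) ∪ {0} with hUdef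
    have hUclosed : IsClosed U :=
      IsClosed.union
        ((hncont.mono Set.Icc_subset_Ici_self).preimage_isClosed_of_isClosed isClosed_Icc isClosed_Iic)
        isClosed_singleton
    have hUne : U.Nonempty := ⟨0, Or.inr rfl⟩
    have hUbdd : BddAbove U := by
      refine ⟨t₀, fun σ hσ => ?_⟩
      rcases hσ with h' | h'
      · exact h'.1.2
      · rw [Set.mem_singleton_iff] at h'; rw [h']; exact ht₀0
    set τ := sSup U with hτdef
    have hτU : τ ∈ U := hUclosed.csSup_mem hUne hUbdd
    have hτt₀ : τ ≤ t₀ := by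
      refine csSup_le hUne fun σ hσ => ?_
      rcases hσ with h' | h'
      · exact h'.1.2
      · rw [Set.mem_singleton_iff] at h'; rw [h']; exact ht₀0
    have hτ0 : 0 ≤ τ := le_csSup hUbdd (Or.inr rfl)
    have hτlt : τ < t₀ := by
      rcases lt_or_eq_of_le hτt₀ with h' | h'
      · exact h'
      · exfalso
        rcases hτU with h'' | h''
        · rw [h'] at h''
          have := h''.2
          simp only [Set.mem_preimage, Set.mem_Iic] at this
          have h2 : n₂ ≤ n t₀ := ht₀T.2
          linarith
        · rw [Set.mem_singleton_iff] at h''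
          rw [h''] at h'
          have := ht₀T.2
          rw [← h'] at this
          exact absurd this (not_le.2 h0')
    have hmid : ∀ σ ∈ Set.Ioo τ t₀, F (n σ) ≤ 0 := by
      intro σ hσ
      have hσ0 : 0 ≤ σ := le_trans hτ0 hσ.1.le
      have h2 : n σ < n₂ := hbefore σ hσ0 hσ.2
      have h1 : n₁ < n σ := by
        by_contra hcon
        push_neg at hcon
        have : σ ∈ U := Or.inl ⟨⟨hσ0, hσ.2.le⟩, hcon⟩
        exact absurd (le_csSup hUbdd this) (not_le.2 hσ.1)
      exact (hFneg2 _ h1 h2).le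
    have hcmp := core' τ t₀ hτ0 hτt₀ 0 hmid
    simp only [zero_mul, add_zero] at hcmp
    have hτval : n τ < n₂ := by
      rcases hτU with h' | h'
      · have := h'.2
        simp only [Set.mem_preimage, Set.mem_Iic] at this
        linarith
      · rw [Set.mem_singleton_iff] at h'
        rw [h']; exact h0'
    have := ht₀T.2
    simp only [Set.mem_preimage, Set.mem_Ici] at this
    linarith
  -- once below n₁, always below n₁
  have hC : ∀ s, 0 ≤ s → n s ≤ n₁ → ∀ t, s ≤ t → n t ≤ n₁ := by
    intro s hs hns t hst
    by_contra hcon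
    push_neg at hcon
    set S := Set.Icc s t ∩ n ⁻¹' Set.Iic n₁ with hSdef
    have hsub : Set.Icc s t ⊆ Set.Ici 0 :=
      Set.Icc_subset_Ici_self.trans (Set.Ici_subset_Ici.2 hs)
    have hSclosed : IsClosed S :=
      (hncont.mono hsub).preimage_isClosed_of_isClosed isClosed_Icc isClosed_Iic
    have hSne : S.Nonempty := ⟨s, ⟨le_rfl, hst⟩, hns⟩
    have hSbdd : BddAbove S := ⟨t, fun σ hσ => hσ.1.2⟩
    set τ := sSup S with hτdef
    have hτS : τ ∈ S := hSclosed.csSup_mem hSne hSbdd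
    have hτ0 : 0 ≤ τ := le_trans hs hτS.1.1
    have hτt : τ ≤ t := hτS.1.2
    have hmid : ∀ σ ∈ Set.Ioo τ t, F (n σ) ≤ 0 := by
      intro σ hσ
      have hσ0 : 0 ≤ σ := le_trans hτ0 hσ.1.le
      have h1 : n₁ < n σ := by
        by_contra hcon2
        push_neg at hcon2
        have : σ ∈ S := ⟨⟨le_trans hτS.1.1 hσ.1.le, hσ.2.le⟩, hcon2⟩
        exact absurd (le_csSup hSbdd this) (not_le.2 hσ.1)
      exact (hFneg2 _ h1 (hB σ hσ0)).le
    have hcmp := core' τ t hτ0 hτt 0 hmid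
    simp only [zero_mul, add_zero] at hcmp
    have := hτS.2
    simp only [Set.mem_preimage, Set.mem_Iic] at this
    linarith
  -- once above n₁, always above n₁
  have hD : ∀ s, 0 ≤ s → n₁ ≤ n s → ∀ t, s ≤ t → n₁ ≤ n t := by
    intro s hs hns t hst
    by_contra hcon
    push_neg at hcon
    set S := Set.Icc s t ∩ n ⁻¹' Set.Ici n₁ with hSdef
    have hsub : Set.Icc s t ⊆ Set.Ici 0 :=
      Set.Icc_subset_Ici_self.trans (Set.Ici_subset_Ici.2 hs)
    have hSclosed : IsClosed S :=
      (hncont.mono hsub).preimage_isClosed_of_isClosed isClosed_Icc isClosed_Ici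
    have hSne : S.Nonempty := ⟨s, ⟨le_rfl, hst⟩, hns⟩
    have hSbdd : BddAbove S := ⟨t, fun σ hσ => hσ.1.2⟩
    set τ := sSup S with hτdef
    have hτS : τ ∈ S := hSclosed.csSup_mem hSne hSbdd
    have hτ0 : 0 ≤ τ := le_trans hs hτS.1.1
    have hτt : τ ≤ t := hτS.1.2
    have hmid : ∀ σ ∈ Set.Ioo τ t, (0:ℝ) ≤ F (n σ) := by
      intro σ hσ
      have hσ0 : 0 ≤ σ := le_trans hτ0 hσ.1.le
      have h1 : n σ < n₁ := by
        by_contra hcon2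
        push_neg at hcon2
        have : σ ∈ S := ⟨⟨le_trans hτS.1.1 hσ.1.le, hσ.2.le⟩, hcon2⟩
        exact absurd (le_csSup hSbdd this) (not_le.2 hσ.1)
      exact (hFpos _ (hA σ hσ0) h1).le
    have hcmp := core τ t hτ0 hτt 0 hmid
    simp only [zero_mul, add_zero] at hcmp
    have := hτS.2
    simp only [Set.mem_preimage, Set.mem_Ici] at this
    linarith
  -- main case split
  rcases le_or_gt (n 0) n₁ with hle | hgt
  · -- monotone increasing towards n₁
    have hub : ∀ t, 0 ≤ t → n t ≤ n₁ := fun t ht => hC 0 le_rfl hle t ht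
    have hmono : ∀ a b, 0 ≤ a → a ≤ b → n a ≤ n b := by
      intro a b ha hab
      have := core a b ha hab 0 (fun σ hσ => by
        have h1 : 0 ≤ n σ := hA σ (le_trans ha hσ.1.le)
        have h2 : n σ ≤ n₁ := hub σ (le_trans ha hσ.1.le)
        rcases eq_or_lt_of_le h2 with he | hlt
        · rw [he]; exact le_of_eq hz₁.symm
        · exact (hFpos _ h1 hlt).le)
      simpa using this
    set N : ℝ → ℝ := fun t => n (max t 0) with hN
    have hNmono : Monotone N := fun a b hab =>
      hmono _ _ (le_max_right a 0) (max_le_max hab le_rfl)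
    have hNbdd : BddAbove (Set.range N) := by
      refine ⟨n₁, ?_⟩
      rintro x ⟨t, rfl⟩
      exact hub _ (le_max_right t 0)
    have hlim : Filter.Tendsto N Filter.atTop (nhds (⨆ t, N t)) :=
      tendsto_atTop_ciSup hNmono hNbdd
    set L := ⨆ t, N t with hL
    have hNn : N =ᶠ[Filter.atTop] n := by
      filter_upwards [Filter.eventually_ge_atTop (0:ℝ)] with t ht
      simp [hN, max_eq_left ht]
    have hlim' : Filter.Tendsto n Filter.atTop (nhds L) := hlim.congr' hNn
    have hLle : L ≤ n₁ := ciSup_le (fun t => hub _ (le_max_right t 0))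
    have h0L : n 0 ≤ L := by
      have := le_ciSup hNbdd (0:ℝ)
      simpa [hN] using this
    have hLub : ∀ t, 0 ≤ t → n t ≤ L := by
      intro t ht
      have := le_ciSup hNbdd t
      simpa [hN, max_eq_left ht] using this
    rcases eq_or_lt_of_le hLle with heq | hLlt
    · rw [← heq]; exact hlim'
    · exfalso
      obtain ⟨x₀, hx₀mem, hx₀min⟩ :=
        isCompact_Icc.exists_isMinOn (Set.nonempty_Icc.2 h0L) hFcont.continuousOn
      have hδ : 0 < F x₀ := hFpos x₀ (le_trans h0 hx₀mem.1) (lt_of_le_of_lt hx₀mem.2 hLlt)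
      have hrange : ∀ σ, 0 ≤ σ → F x₀ ≤ F (n σ) := fun σ hσ =>
        isMinOn_iff.1 hx₀min (n σ) ⟨hmono 0 σ le_rfl hσ, hLub σ hσ⟩
      set T := (n₁ - n 0) / F x₀ + 1 with hT
      have hT0 : 0 ≤ T := by
        have := div_nonneg (sub_nonneg.2 hle) hδ.le
        rw [hT]; linarith
      have hcmp := core 0 T le_rfl hT0 (F x₀) (fun σ hσ => hrange σ hσ.1.le)
      have hTn : n T ≤ n₁ := hub T hT0
      have hexp : F x₀ * (T - 0) = n₁ - n 0 + F x₀ := by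
        rw [hT]; field_simp; ring
      linarith
  · by_cases hex : ∃ s, 0 ≤ s ∧ n s ≤ n₁
    · -- hits n₁ and stays there
      obtain ⟨s, hs0, hsle⟩ := hex
      have hsub : Set.Icc (0:ℝ) s ⊆ Set.Ici 0 := Set.Icc_subset_Ici_self
      have hmem : n₁ ∈ Set.Icc (n s) (n 0) := ⟨hsle, hgt.le⟩
      obtain ⟨s', hs'mem, hs'⟩ := intermediate_value_Icc' hs0 (hncont.mono hsub) hmem
      have hconst : ∀ t, s' ≤ t → n t = n₁ := fun t ht =>
        le_antisymm (hC s' hs'mem.1 (le_of_eq hs') t ht)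
          (hD s' hs'mem.1 (ge_of_eq hs') t ht)
      refine tendsto_const_nhds.congr' ?_
      filter_upwards [Filter.eventually_ge_atTop s'] with t ht
      exact (hconst t ht).symm
    · -- stays above n₁, decreasing towards n₁
      push_neg at hex
      have hlb : ∀ t, 0 ≤ t → n₁ < n t := fun t ht => hex t ht
      have hanti' : ∀ a b, 0 ≤ a → a ≤ b → n b ≤ n a := by
        intro a b ha hab
        have := core' a b ha hab 0 (fun σ hσ => by
          have hσ0 : 0 ≤ σ := le_trans ha hσ.1.le
          exact (hFneg2 _ (hlb σ hσ0) (hB σ hσ0)).le)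
        simpa using this
      set N : ℝ → ℝ := fun t => n (max t 0) with hN
      have hNanti : Antitone N := fun a b hab =>
        hanti' _ _ (le_max_right a 0) (max_le_max hab le_rfl)
      have hNbdd : BddBelow (Set.range N) := by
        refine ⟨n₁, ?_⟩
        rintro x ⟨t, rfl⟩
        exact (hlb _ (le_max_right t 0)).le
      have hlim : Filter.Tendsto N Filter.atTop (nhds (⨅ t, N t)) :=
        tendsto_atTop_ciInf hNanti hNbdd
      set L := ⨅ t, N t with hL
      have hNn : N =ᶠ[Filter.atTop] n := by
        filter_upwards [Filter.eventually_ge_atTop (0:ℝ)] with t ht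
        simp [hN, max_eq_left ht]
      have hlim' : Filter.Tendsto n Filter.atTop (nhds L) := hlim.congr' hNn
      have hLge : n₁ ≤ L := le_ciInf (fun t => (hlb _ (le_max_right t 0)).le)
      have hL0 : L ≤ n 0 := by
        have := ciInf_le hNbdd (0:ℝ)
        simpa [hN] using this
      have hLlb : ∀ t, 0 ≤ t → L ≤ n t := by
        intro t ht
        have := ciInf_le hNbdd t
        simpa [hN, max_eq_left ht] using this
      rcases eq_or_lt_of_le hLge with heq | hLlt
      · rw [heq]; exact hlim'
      · exfalso
        obtain ⟨x₀, hx₀mem, hx₀max⟩ :=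
          isCompact_Icc.exists_isMaxOn (Set.nonempty_Icc.2 hL0) hFcont.continuousOn
        have hδ : F x₀ < 0 :=
          hFneg2 x₀ (lt_of_lt_of_le hLlt hx₀mem.1) (lt_of_le_of_lt hx₀mem.2 h0')
        have hrange : ∀ σ, 0 ≤ σ → F (n σ) ≤ F x₀ := fun σ hσ =>
          isMaxOn_iff.1 hx₀max (n σ) ⟨hLlb σ hσ, hanti' 0 σ le_rfl hσ⟩
        set T := (n₁ - n 0) / F x₀ + 1 with hT
        have hT0 : 0 ≤ T := by
          have h1 : 0 ≤ (n₁ - n 0) / F x₀ := by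
            rw [div_nonneg_iff]
            right
            constructor <;> linarith
          rw [hT]; linarith
        have hcmp := core' 0 T le_rfl hT0 (F x₀) (fun σ hσ => hrange σ hσ.1.le)
        have hTn : n₁ < n T := hlb T hT0
        have hexp : F x₀ * (T - 0) = n₁ - n 0 + F x₀ := by
          rw [hT]; field_simp [hδ.ne]; ring
        linarith
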